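/- Let n ≥ 1 be an integer and let v ∈ ℝ^{2n} be a unit vector with ⟨u2, v⟩ ≥ 0, where u2 is the unit vector with coordinates 1/√(2n) on V1 = {1,...,n} and −1/√(2n) on V2 = {n+1,...,2n}. Let V1' ⊆ {1,...,2n} be any set of n indices such that v_i ≥ v_j for every i ∈ V1' and j ∉ V1', and let V2' be its complement. Then the partition (V1', V2') is γ-correct for γ = (4/3)·(1 − ⟨u2, v⟩²) = (4/3)·sin²∠(u2, v); that is, |V1 ∩ V1'| ≥ n − (4/3)·n·(1 − ⟨u2, v⟩²) and |V2 ∩ V2'| ≥ n − (4/3)·n·(1 − ⟨u2, v⟩²). -/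

import Mathlib

open scoped RealInnerProductSpace

private lemma sum_le_sum_of_pairwise_le {α : Type*} (f : α → ℝ)
    (S T : Finset α) (hST : S.card = T.card)
    (h : ∀ i ∈ S, ∀ j ∈ T, f i ≤ f j) :
    ∑ i ∈ S, f i ≤ ∑ j ∈ T, f j := by
  rcases S.eq_empty_or_nonempty with rfl | hS
  · have hT : T = ∅ := by
      have := hST.symm
      simpa [Finset.card_eq_zero] using this
    simp [hT]
  · have hT : T.Nonempty := by
      rw [← Finset.card_pos, ← hST, Finset.card_pos]; exact hS
    calc ∑ i ∈ S, f i ≤ ∑ _i ∈ S, T.inf' hT f := by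
          exact Finset.sum_le_sum fun i hi => Finset.le_inf' hT f fun j hj => h i hi j hj
      _ = S.card • T.inf' hT f := by rw [Finset.sum_const]
      _ = T.card • T.inf' hT f := by rw [hST]
      _ ≤ ∑ j ∈ T, f j := Finset.card_nsmul_le_sum T f _ fun j hj => Finset.inf'_le f hj

theorem spectral_partition_gamma_correct (n : ℕ) (hn : 1 ≤ n)
    (v u2 : EuclideanSpace ℝ (Fin (2*n)))
    (hu2 : ∀ i : Fin (2*n), u2 i =
      if (i : ℕ) < n then 1 / Real.sqrt (2*n) else -(1 / Real.sqrt (2*n)))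
    (hv : ‖v‖ = 1) (hpos : 0 ≤ ⟪u2, v⟫)
    (V1' : Finset (Fin (2*n))) (hcard : V1'.card = n)
    (hsorted : ∀ i ∈ V1', ∀ j ∉ V1', v j ≤ v i) :
    (n : ℝ) - (4/3) * (n : ℝ) * (1 - ⟪u2, v⟫^2) ≤
        ((Finset.univ.filter (fun i : Fin (2*n) => (i : ℕ) < n) ∩ V1').card : ℝ) ∧
      (n : ℝ) - (4/3) * (n : ℝ) * (1 - ⟪u2, v⟫^2) ≤
        ((Finset.univ.filter (fun i : Fin (2*n) => ¬ (i : ℕ) < n) ∩ V1'ᶜ).card : ℝ) := by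
  classical
  set a : ℝ := Real.sqrt (2*n) with ha_def
  have ha : 0 < a := Real.sqrt_pos.2 (by positivity)
  set A : Finset (Fin (2*n)) := Finset.univ.filter (fun i : Fin (2*n) => (i : ℕ) < n) with hA_def
  -- card A = n
  have hA : A.card = n := by
    have hmap : A = Finset.map (Fin.castLEEmb (by omega : n ≤ 2*n)) Finset.univ := by
      ext i
      simp only [hA_def, Finset.mem_filter, Finset.mem_univ, true_and, Finset.mem_map,
        Fin.castLEEmb_apply]
      constructor
      · intro hi
        exact ⟨⟨(i : ℕ), hi⟩, rfl⟩
      · rintro ⟨j, -, rfl⟩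
        simpa using j.isLt
    rw [hmap, Finset.card_map, Finset.card_univ, Fintype.card_fin]
  have hAcomp : Finset.univ.filter (fun i : Fin (2*n) => ¬ (i : ℕ) < n) = Aᶜ := by
    rw [Finset.compl_eq_univ_sdiff, hA_def, Finset.filter_not]
  have hAc : Aᶜ.card = n := by
    rw [Finset.card_compl, hA, Fintype.card_fin]; omega
  -- cardinalities
  have hsd : ∀ (s t : Finset (Fin (2*n))), s \ t = s ∩ tᶜ := fun s t => by
    ext i; simp [Finset.mem_sdiff, Finset.mem_compl, Finset.mem_inter]
  set m := (A ∩ V1').card with hm_def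
  set k := (A ∩ V1'ᶜ).card with hk_def
  set k' := (Aᶜ ∩ V1').card with hk'_def
  set m' := (Aᶜ ∩ V1'ᶜ).card with hm'_def
  have h1 : m + k = n := by
    have := Finset.card_inter_add_card_sdiff A V1'
    rwa [hsd _ _, hA, ← hk_def, ← hm_def] at this
  have h2 : k' + m' = n := by
    have := Finset.card_inter_add_card_sdiff Aᶜ V1'
    rwa [hsd _ _, hAc, ← hm'_def, ← hk'_def] at this
  have h3 : m + k' = n := by
    have := Finset.card_inter_add_card_sdiff V1' A
    rwa [hsd _ _, hcard, Finset.inter_comm V1' A, Finset.inter_comm V1' Aᶜ,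
      ← hm_def, ← hk'_def] at this
  have hkk' : k = k' := by omega
  have hmm' : m' = m := by omega
  -- inner product as sum
  have hinner : ⟪u2, v⟫ = ∑ i, u2 i * v i := by
    simp [PiLp.inner_apply, RCLike.inner_apply, conj_trivial]
    exact Finset.sum_congr rfl fun i _ => mul_comm _ _
  set c : ℝ := ⟪u2, v⟫ with hc_def
  -- norm
  have hnorm : ∑ i, v i ^ 2 = 1 := by
    have := EuclideanSpace.norm_eq v
    rw [hv] at this
    have h1' : Real.sqrt (∑ i, ‖v i‖ ^ 2) = 1 := this.symm
    rw [Real.sqrt_eq_one] at h1'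
    simpa [Real.norm_eq_abs, sq_abs] using h1'
  -- c in terms of sums over A and Aᶜ
  have hsplit : a * c = (∑ i ∈ A, v i) - (∑ i ∈ Aᶜ, v i) := by
    have : c = ∑ i ∈ A, (1/a) * v i + ∑ i ∈ Aᶜ, (-(1/a)) * v i := by
      rw [hinner, ← Finset.sum_add_sum_compl A]
      congr 1
      · refine Finset.sum_congr rfl fun i hi => ?_
        have : (i : ℕ) < n := by simpa [hA_def] using hi
        rw [hu2 i, if_pos this]
      · refine Finset.sum_congr rfl fun i hi => ?_
        have : ¬ (i : ℕ) < n := by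
          simp only [Finset.mem_compl, hA_def, Finset.mem_filter, Finset.mem_univ,
            true_and] at hi
          exact hi
        rw [hu2 i, if_neg this]
    rw [this]
    rw [← Finset.mul_sum, ← Finset.mul_sum]
    field_simp
    ring
  -- key sorting inequality
  have hkey : ∑ i ∈ A ∩ V1'ᶜ, v i ≤ ∑ j ∈ Aᶜ ∩ V1', v j := by
    refine sum_le_sum_of_pairwise_le v _ _ (by rw [← hk_def, ← hk'_def, hkk']) ?_
    intro i hi j hj
    have hiV : i ∉ V1' := by
      simp only [Finset.mem_inter, Finset.mem_compl] at hi; exact hi.2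
    have hjV : j ∈ V1' := (Finset.mem_inter.1 hj).2
    exact hsorted j hjV i hiV
  set D := A ∩ V1' with hD_def
  set E := Aᶜ ∩ V1'ᶜ with hE_def
  have hmain : a * c ≤ (∑ i ∈ D, v i) - (∑ i ∈ E, v i) := by
    have hsA : ∑ i ∈ A, v i = ∑ i ∈ D, v i + ∑ i ∈ A ∩ V1'ᶜ, v i := by
      rw [hD_def, ← hsd _ _]
      exact (Finset.sum_inter_add_sum_sdiff A V1' v).symm
    have hsAc : ∑ i ∈ Aᶜ, v i = ∑ i ∈ Aᶜ ∩ V1', v i + ∑ i ∈ E, v i := by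
      rw [hE_def, ← hsd _ _]
      exact (Finset.sum_inter_add_sum_sdiff Aᶜ V1' v).symm
    rw [hsplit, hsA, hsAc]
    linarith [hkey]
  -- Cauchy-Schwarz style bound
  set F := D ∪ E with hF_def
  have hdisj : Disjoint D E := by
    refine Finset.disjoint_left.2 fun i hiD hiE => ?_
    have h1' : i ∈ V1' := (Finset.mem_inter.1 hiD).2
    have h2' : i ∉ V1' := by
      have := (Finset.mem_inter.1 hiE).2
      simpa using this
    exact h2' h1'
  have hFcard : F.card = m + m := by
    rw [hF_def, Finset.card_union_of_disjoint hdisj, ← hm_def, ← hm'_def, hmm']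
  set g : Fin (2*n) → ℝ := fun i => if i ∈ V1' then v i else -(v i) with hg_def
  have hgsum : ∑ i ∈ F, g i = (∑ i ∈ D, v i) - (∑ i ∈ E, v i) := by
    rw [hF_def, Finset.sum_union hdisj]
    have hD' : ∑ i ∈ D, g i = ∑ i ∈ D, v i :=
      Finset.sum_congr rfl fun i hi => by
        rw [hg_def]; simp only []
        rw [if_pos ((Finset.mem_inter.1 hi).2)]
    have hE' : ∑ i ∈ E, g i = ∑ i ∈ E, -(v i) :=
      Finset.sum_congr rfl fun i hi => by
        have : i ∉ V1' := by
          have := (Finset.mem_inter.1 hi).2; simpa using this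
        rw [hg_def]; simp only []
        rw [if_neg this]
    rw [hD', hE', Finset.sum_neg_distrib]
    ring
  have hgsq : ∀ i, g i ^ 2 = v i ^ 2 := by
    intro i; rw [hg_def]; simp only []
    split_ifs <;> ring
  have hCS : ((∑ i ∈ F, g i)) ^ 2 ≤ (F.card : ℝ) * ∑ i ∈ F, g i ^ 2 :=
    sq_sum_le_card_mul_sum_sq
  have hsub : ∑ i ∈ F, g i ^ 2 ≤ 1 := by
    calc ∑ i ∈ F, g i ^ 2 = ∑ i ∈ F, v i ^ 2 := Finset.sum_congr rfl fun i _ => hgsq i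
      _ ≤ ∑ i, v i ^ 2 := Finset.sum_le_sum_of_subset_of_nonneg (Finset.subset_univ F)
          (fun i _ _ => sq_nonneg _)
      _ = 1 := hnorm
  -- combine
  have hac_nonneg : 0 ≤ a * c := mul_nonneg ha.le hpos
  have hsq : (a * c) ^ 2 ≤ (F.card : ℝ) * 1 := by
    calc (a * c) ^ 2 ≤ ((∑ i ∈ F, g i)) ^ 2 := by
          rw [hgsum]; exact pow_le_pow_left₀ hac_nonneg (hgsum ▸ hmain) 2
      _ ≤ (F.card : ℝ) * ∑ i ∈ F, g i ^ 2 := hCS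
      _ ≤ (F.card : ℝ) * 1 := by
          exact mul_le_mul_of_nonneg_left hsub (by positivity)
  have ha2 : a ^ 2 = 2 * n := by
    rw [ha_def, Real.sq_sqrt (by positivity)]
  have hfinal : (n : ℝ) * c ^ 2 ≤ m := by
    have : (a * c) ^ 2 = 2 * n * c ^ 2 := by rw [mul_pow, ha2]
    rw [this, hFcard] at hsq
    push_cast at hsq
    nlinarith [hsq]
  have hmn : (m : ℝ) ≤ n := by
    have : m ≤ n := by omega
    exact_mod_cast this
  have hn' : (1 : ℝ) ≤ n := by exact_mod_cast hn
  clear_value c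
  clear hpos hinner hsplit hmain hsq hgsum hkey hsorted hu2 hv hnorm hsub hCS hgsq
  constructor
  · linarith [hfinal, hmn, hn']
  · rw [hAcomp, ← hm'_def, hmm']
    linarith [hfinal, hmn, hn']
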